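/- On U = {(x,y) ∈ ℝ² : x > 0}, the metric g₃ given by the matrix G₃(x,y) = diag(x², x²) (i.e., g₃ = x²(dx² + dy²)) has Gauss curvature K = 1/x⁴ > 0, and the function k := √K = 1/x² satisfies the tensor equation (∇²k)_{ij} = (5/(2k)) ∂_i k ∂_j k − 2k³ (g₃)_{ij} on U. -/

import Mathlib

noncomputable section
open Matrix Real

/-- Points of the parameter domain `U ⊆ ℝ²`. -/
abbrev Pt : Type := Fin 2 → ℝ
/-- Vectors in `ℝ³`. -/
abbrev Vec3 : Type := Fin 3 → ℝ

/-- Partial derivative `∂ᵢ` of a scalar function on `ℝ²`. -/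
def pd (i : Fin 2) (f : Pt → ℝ) : Pt → ℝ :=
  fun p => fderiv ℝ f p (Pi.single i 1)

/-- Partial derivative `∂ᵢ` of an `ℝ³`-valued function on `ℝ²`. -/
def pdV (i : Fin 2) (f : Pt → Vec3) : Pt → Vec3 :=
  fun p => fderiv ℝ f p (Pi.single i 1)

/-- The induced metric (first fundamental form) `gᵢⱼ = ∂ᵢφ ⬝ ∂ⱼφ` of a map `φ : ℝ² → ℝ³`. -/
def indMetric (φ : Pt → Vec3) : Pt → Matrix (Fin 2) (Fin 2) ℝ :=
  fun p => Matrix.of fun i j => pdV i φ p ⬝ᵥ pdV j φ p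

/-- The unit normal `n = (∂₁φ × ∂₂φ)/‖∂₁φ × ∂₂φ‖`. -/
def unitNormal (φ : Pt → Vec3) : Pt → Vec3 :=
  fun p => (Real.sqrt ((crossProduct (pdV 0 φ p) (pdV 1 φ p)) ⬝ᵥ
      (crossProduct (pdV 0 φ p) (pdV 1 φ p))))⁻¹ •
    crossProduct (pdV 0 φ p) (pdV 1 φ p)

/-- The second fundamental form `hᵢⱼ = n ⬝ ∂ᵢ∂ⱼφ`. -/
def sff (φ : Pt → Vec3) : Pt → Matrix (Fin 2) (Fin 2) ℝ :=
  fun p => Matrix.of fun i j => unitNormal φ p ⬝ᵥ pdV i (pdV j φ) p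

/-- Christoffel symbols `Γ^k_{ij}` of a metric `g`. -/
def christoffel (g : Pt → Matrix (Fin 2) (Fin 2) ℝ) (k i j : Fin 2) : Pt → ℝ :=
  fun p => (1/2) * ∑ l, (g p)⁻¹ k l *
    (pd i (fun q => g q j l) p + pd j (fun q => g q i l) p - pd l (fun q => g q i j) p)

/-- Covariant derivative `∇ᵢ h_{jk}` of a symmetric 2-tensor `h` with respect to `g`. -/
def covD (g h : Pt → Matrix (Fin 2) (Fin 2) ℝ) (i j k : Fin 2) : Pt → ℝ :=
  fun p => pd i (fun q => h q j k) p
    - ∑ l, christoffel g l i j p * h p l k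
    - ∑ l, christoffel g l i k p * h p j l

/-- Covariant Hessian `(∇²u)ᵢⱼ = ∂ᵢ∂ⱼu − Σₖ Γ^k_{ij} ∂ₖu`. -/
def hess (g : Pt → Matrix (Fin 2) (Fin 2) ℝ) (u : Pt → ℝ) (i j : Fin 2) : Pt → ℝ :=
  fun p => pd i (pd j u) p - ∑ k, christoffel g k i j p * pd k u p

/-- The curvature component `R₁₂₁₂` of a metric `g` (indices `1,2` rendered as `0,1`). -/
def R1212 (g : Pt → Matrix (Fin 2) (Fin 2) ℝ) : Pt → ℝ :=
  fun p => ∑ m, g p 0 m *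
    (pd 0 (christoffel g m 1 1) p - pd 1 (christoffel g m 1 0) p +
      ∑ l, (christoffel g m 0 l p * christoffel g l 1 1 p -
            christoffel g m 1 l p * christoffel g l 1 0 p))

/-- The Gauss curvature `K = R₁₂₁₂ / det g` of a metric `g`. -/
def gaussK (g : Pt → Matrix (Fin 2) (Fin 2) ℝ) : Pt → ℝ :=
  fun p => R1212 g p / (g p).det

/-- The squared norm `|du|²_g = Σᵢⱼ g^{ij} ∂ᵢu ∂ⱼu`. -/
def gradSq (g : Pt → Matrix (Fin 2) (Fin 2) ℝ) (u : Pt → ℝ) : Pt → ℝ :=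
  fun p => ∑ i, ∑ j, (g p)⁻¹ i j * pd i u p * pd j u p

/-- `g` is a smooth Riemannian metric on `U`: smooth entries, symmetric and
positive definite at each point of `U`. -/
def IsMetricOn (g : Pt → Matrix (Fin 2) (Fin 2) ℝ) (U : Set Pt) : Prop :=
  (∀ i j, ContDiffOn ℝ (⊤ : ℕ∞) (fun p => g p i j) U) ∧
  (∀ p ∈ U, (g p).IsSymm ∧ (g p).PosDef)

/-- `φ` is a smooth immersion on `U`. -/
def IsImmersionOn (φ : Pt → Vec3) (U : Set Pt) : Prop :=
  ContDiffOn ℝ (⊤ : ℕ∞) φ U ∧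
  ∀ p ∈ U, LinearIndependent ℝ ![pdV 0 φ p, pdV 1 φ p]

/-- The model metric `g₃ = x²(dx² + dy²)` on the half-plane `x > 0`. -/
def modelG : Pt → Matrix (Fin 2) (Fin 2) ℝ :=
  fun q => !![(q 0) ^ 2, 0; 0, (q 0) ^ 2]

/-- The candidate square root of the (absolute) Gauss curvature. -/
def modelk : Pt → ℝ :=
  fun q => 1 / (q 0) ^ 2

/-! ### Auxiliary lemmas -/

lemma pd_proj (h : ℝ → ℝ) (i : Fin 2) (p : Pt) :
    pd i (fun q => h (q 0)) p = (Pi.single i 1 : Pt) 0 * deriv h (p 0) := by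
  by_cases hd : DifferentiableAt ℝ h (p 0)
  · have hproj : HasFDerivAt (fun q : Pt => q 0)
        (ContinuousLinearMap.proj 0 : Pt →L[ℝ] ℝ) p := by
      exact
        (ContinuousLinearMap.proj (R := ℝ) (φ := fun _ : Fin 2 => ℝ) (0 : Fin 2)).hasFDerivAt
          (x := p)
    have H : HasFDerivAt (fun q : Pt => h (q 0))
        (deriv h (p 0) • (ContinuousLinearMap.proj 0 : Pt →L[ℝ] ℝ)) p :=
      (hd.hasDerivAt).comp_hasFDerivAt p hproj
    unfold pd
    rw [H.fderiv]
    simp [mul_comm]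
  · have hι : DifferentiableAt ℝ
        (fun t : ℝ => (fun j : Fin 2 => p j + (t - p 0) * (Pi.single 0 1 : Pt) j : Pt)) (p 0) := by
      apply differentiableAt_pi.2
      intro j
      fun_prop
    have hnd : ¬ DifferentiableAt ℝ (fun q : Pt => h (q 0)) p := by
      intro hc
      apply hd
      have hpt : p = (fun j : Fin 2 => p j + (p 0 - p 0) * (Pi.single 0 1 : Pt) j : Pt) := by
        funext j; ring
      have hc' := hpt ▸ hc
      have := hc'.comp (p 0) hι
      have hfun : ((fun q : Pt => h (q 0)) ∘
          (fun t : ℝ => (fun j : Fin 2 => p j + (t - p 0) * (Pi.single 0 1 : Pt) j : Pt))) = h := by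
        funext t
        simp
      rwa [hfun] at this
    unfold pd
    rw [fderiv_zero_of_not_differentiableAt hnd, deriv_zero_of_not_differentiableAt hd]
    simp

lemma pd0_proj (h : ℝ → ℝ) (p : Pt) : pd 0 (fun q => h (q 0)) p = deriv h (p 0) := by
  rw [pd_proj]; simp

lemma pd1_proj (h : ℝ → ℝ) (p : Pt) : pd 1 (fun q => h (q 0)) p = 0 := by
  rw [pd_proj]; simp [Pi.single_apply]

lemma modelG_inv (q : Pt) : (modelG q)⁻¹ = !![((q 0) ^ 2)⁻¹, 0; 0, ((q 0) ^ 2)⁻¹] := by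
  show (!![(q 0) ^ 2, 0; 0, (q 0) ^ 2] : Matrix (Fin 2) (Fin 2) ℝ)⁻¹ = _
  rw [Matrix.inv_def, Matrix.adjugate_fin_two, Matrix.det_fin_two]
  ext i j
  fin_cases i <;> fin_cases j <;>
    simp [Ring.inverse_eq_inv'] <;>
    (rcases eq_or_ne (q 0) 0 with h | h
     · simp [h]
     · field_simp
       try ring)

lemma pdG00 (i : Fin 2) (q : Pt) :
    pd i (fun q' : Pt => modelG q' 0 0) q = (Pi.single i 1 : Pt) 0 * (2 * q 0) := by
  have h1 : (fun q' : Pt => modelG q' 0 0) = fun q' => (q' 0) ^ 2 := by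
    funext q'; simp [modelG]
  rw [h1, pd_proj (fun x => x ^ 2)]
  simp [deriv_pow]
  try ring

lemma pdG11 (i : Fin 2) (q : Pt) :
    pd i (fun q' : Pt => modelG q' 1 1) q = (Pi.single i 1 : Pt) 0 * (2 * q 0) := by
  have h1 : (fun q' : Pt => modelG q' 1 1) = fun q' => (q' 0) ^ 2 := by
    funext q'; simp [modelG]
  rw [h1, pd_proj (fun x => x ^ 2)]
  simp [deriv_pow]
  try ring

lemma pdG01 (i : Fin 2) (q : Pt) : pd i (fun q' : Pt => modelG q' 0 1) q = 0 := by
  have h1 : (fun q' : Pt => modelG q' 0 1) = fun q' => (0 : ℝ) := by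
    funext q'; simp [modelG]
  rw [h1]
  show fderiv ℝ (fun _ : Pt => (0:ℝ)) q (Pi.single i 1) = 0
  simp

lemma pdG10 (i : Fin 2) (q : Pt) : pd i (fun q' : Pt => modelG q' 1 0) q = 0 := by
  have h1 : (fun q' : Pt => modelG q' 1 0) = fun q' => (0 : ℝ) := by
    funext q'; simp [modelG]
  rw [h1]
  show fderiv ℝ (fun _ : Pt => (0:ℝ)) q (Pi.single i 1) = 0
  simp

/-- Explicit Christoffel symbols of the model metric. -/
def Gam (k i j : Fin 2) (x : ℝ) : ℝ :=
  (![!![x⁻¹, 0; 0, -x⁻¹], !![0, x⁻¹; x⁻¹, 0]] : Fin 2 → Matrix (Fin 2) (Fin 2) ℝ) k i j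

lemma christoffel_eq (k i j : Fin 2) :
    christoffel modelG k i j = fun q => Gam k i j (q 0) := by
  funext q
  fin_cases k <;> fin_cases i <;> fin_cases j <;>
    simp [christoffel, Fin.sum_univ_two, modelG_inv, pdG00, pdG01, pdG10, pdG11, Gam,
      Pi.single_apply] <;>
    (rcases eq_or_ne (q 0) 0 with h | h
     · simp [h]
     · field_simp
       try ring)

lemma christoffel_val (k i j : Fin 2) (p : Pt) :
    christoffel modelG k i j p = Gam k i j (p 0) :=
  congrFun (christoffel_eq k i j) p

lemma modelk_eq : modelk = fun q => (fun x : ℝ => x ^ (-2 : ℤ)) (q 0) := by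
  funext q
  simp [modelk, _root_.zpow_neg]
  try norm_cast

lemma pd0_modelk : pd 0 modelk = fun p => -2 * ((p 0) ^ 3)⁻¹ := by
  funext p
  rw [modelk_eq, pd0_proj (fun x => x ^ (-2 : ℤ)), deriv_zpow]
  rw [show ((-2 : ℤ) - 1) = (-3 : ℤ) by norm_num, _root_.zpow_neg]
  norm_num
  try norm_cast

lemma pd1_modelk : pd 1 modelk = fun _ => 0 := by
  funext p
  rw [modelk_eq, pd1_proj (fun x => x ^ (-2 : ℤ))]

lemma pd00_modelk (p : Pt) (hp : p 0 ≠ 0) : pd 0 (pd 0 modelk) p = 6 * ((p 0) ^ 4)⁻¹ := by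
  have h1 : pd 0 modelk = fun q => (fun x : ℝ => -2 * (x ^ 3)⁻¹) (q 0) := pd0_modelk
  rw [h1, pd0_proj (fun x => -2 * (x ^ 3)⁻¹)]
  have hd : HasDerivAt (fun x : ℝ => -2 * (x ^ 3)⁻¹) (6 * ((p 0) ^ 4)⁻¹) (p 0) := by
    have h2 : HasDerivAt (fun x : ℝ => x ^ (-3 : ℤ)) ((-3 : ℤ) * (p 0) ^ ((-3 : ℤ) - 1)) (p 0) :=
      hasDerivAt_zpow (-3) (p 0) (Or.inl hp)
    have h3 := h2.const_mul (-2 : ℝ)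
    have e1 : (fun x : ℝ => -2 * x ^ (-3 : ℤ)) = fun x : ℝ => -2 * (x ^ 3)⁻¹ := by
      funext x
      rw [show ((-3 : ℤ)) = -(3 : ℤ) by norm_num, _root_.zpow_neg]
      norm_num
      try norm_cast
    rw [e1] at h3
    refine h3.congr_deriv ?_
    symm
    rw [show ((-3 : ℤ) - 1) = -(4 : ℤ) by norm_num, _root_.zpow_neg]
    push_cast
    norm_num
    try norm_cast
    try rw [inv_pow]
    try ring
  rw [hd.deriv]

lemma pd_pd1_modelk (i : Fin 2) (p : Pt) : pd i (pd 1 modelk) p = 0 := by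
  rw [pd1_modelk]
  show fderiv ℝ (fun _ : Pt => (0:ℝ)) p (Pi.single i 1) = 0
  simp

lemma pd1_pd0_modelk (p : Pt) : pd 1 (pd 0 modelk) p = 0 := by
  have h1 : pd 0 modelk = fun q => (fun x : ℝ => -2 * (x ^ 3)⁻¹) (q 0) := pd0_modelk
  rw [h1, pd1_proj (fun x => -2 * (x ^ 3)⁻¹)]

lemma pd0_ch011 (p : Pt) (hp : p 0 ≠ 0) :
    pd 0 (christoffel modelG 0 1 1) p = ((p 0) ^ 2)⁻¹ := by
  have h1 : christoffel modelG 0 1 1 = fun q => (fun x : ℝ => -x⁻¹) (q 0) := by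
    rw [christoffel_eq]
    funext q
    simp [Gam]
  rw [h1, pd0_proj (fun x => -x⁻¹)]
  have hd : HasDerivAt (fun x : ℝ => -x⁻¹) (((p 0) ^ 2)⁻¹) (p 0) := by
    have := (hasDerivAt_inv hp).neg
    rw [neg_neg] at this
    exact this
  rw [hd.deriv]

lemma pd1_ch010 (p : Pt) : pd 1 (christoffel modelG 0 1 0) p = 0 := by
  have h1 : christoffel modelG 0 1 0 = fun q => (fun x : ℝ => Gam 0 1 0 x) (q 0) := by
    rw [christoffel_eq]
  rw [h1, pd1_proj (fun x => Gam 0 1 0 x)]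

lemma modelG_det (p : Pt) : (modelG p).det = (p 0) ^ 4 := by
  show (!![(p 0) ^ 2, 0; 0, (p 0) ^ 2] : Matrix (Fin 2) (Fin 2) ℝ).det = _
  rw [Matrix.det_fin_two]
  simp
  ring

lemma R1212_val (p : Pt) (hp : p 0 ≠ 0) : R1212 modelG p = 1 := by
  unfold R1212
  rw [Fin.sum_univ_two]
  have g00 : modelG p 0 0 = (p 0) ^ 2 := by simp [modelG]
  have g01 : modelG p 0 1 = 0 := by simp [modelG]
  rw [g00, g01, Fin.sum_univ_two, Fin.sum_univ_two, pd0_ch011 p hp, pd1_ch010 p]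
  simp only [christoffel_val, Gam]
  simp
  field_simp


/-- On the half-plane `x > 0`, the metric `g₃ = x²(dx² + dy²)` has Gauss curvature
`K = 1/x⁴ > 0` and `k = √K = 1/x²` satisfies the Darboux-integrability tensor equation
`(∇²k)ᵢⱼ = (5/(2k)) ∂ᵢk ∂ⱼk - 2k³ gᵢⱼ`. -/
theorem model_metric_check_15 :
    ∀ p : Pt, 0 < p 0 →
      gaussK modelG p = 1 / (p 0) ^ 4 ∧
      0 < gaussK modelG p ∧
      modelk p = Real.sqrt ( (gaussK modelG p)) ∧
      (∀ i j : Fin 2,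
        hess modelG modelk i j p =
          (5 / (2 * modelk p)) * pd i modelk p * pd j modelk p
            - 2 * modelk p ^ 3 * modelG p i j) := by
  intro p hp
  have hne : p 0 ≠ 0 := ne_of_gt hp
  have hK : gaussK modelG p = 1 / (p 0) ^ 4 := by
    unfold gaussK
    rw [R1212_val p hne, modelG_det]
  refine ⟨hK, ?_, ?_, ?_⟩
  · rw [hK]; positivity
  · rw [hK, show (1:ℝ) / p 0 ^ 4 = ((1:ℝ) / p 0 ^ 2) ^ 2 by ring,
      Real.sqrt_sq (by positivity)]
    simp [modelk]
  · intro i j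
    have hk0 : pd 0 modelk p = -2 * ((p 0) ^ 3)⁻¹ := by rw [pd0_modelk]
    have hk1 : pd 1 modelk p = 0 := by rw [pd1_modelk]
    fin_cases i <;> fin_cases j
    · unfold hess
      simp only [Fin.zero_eta, Fin.mk_one]
      rw [Fin.sum_univ_two, pd00_modelk p hne, hk0, hk1,
        christoffel_val, christoffel_val]
      simp [Gam, modelG, modelk]
      field_simp
      ring
    · unfold hess
      simp only [Fin.zero_eta, Fin.mk_one]
      rw [Fin.sum_univ_two, pd_pd1_modelk, hk0, hk1,
        christoffel_val, christoffel_val]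
      simp [Gam, modelG, modelk]
    · unfold hess
      simp only [Fin.zero_eta, Fin.mk_one]
      rw [Fin.sum_univ_two, pd1_pd0_modelk, hk0, hk1,
        christoffel_val, christoffel_val]
      simp [Gam, modelG, modelk]
    · unfold hess
      simp only [Fin.zero_eta, Fin.mk_one]
      rw [Fin.sum_univ_two, pd_pd1_modelk, hk0, hk1,
        christoffel_val, christoffel_val]
      simp [Gam, modelG, modelk]
      field_simp
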